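/- Fix h > 0, z ∈ ℝ², and data u₀, …, u₆ ∈ ℝ, and let p ∈ ℙ₂ be any minimizer of the least-squares functional Σ_{j=0}^{6} (p(z_j) − u_j)² over ℙ₂. Then the discrete Laplacian obtained by Hessian recovery reproduces the classical five-point finite-difference stencil: ∂²p/∂x²(z) + ∂²p/∂y²(z) = (u₁ + u₃ − 4u₀ + u₄ + u₆) / h². -/

import Mathlib

open Finset

noncomputable def pdx (φ : ℝ × ℝ → ℝ) (p : ℝ × ℝ) : ℝ := fderiv ℝ φ p (1, 0)

noncomputable def pdy (φ : ℝ × ℝ → ℝ) (p : ℝ × ℝ) : ℝ := fderiv ℝ φ p (0, 1)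

/-- `p : ℝ² → ℝ` is a polynomial function of total degree at most 2, i.e. a member of
the six-dimensional space `ℙ₂`. -/
def IsP2 (p : ℝ × ℝ → ℝ) : Prop :=
  ∃ a b c d e f : ℝ, ∀ q : ℝ × ℝ,
    p q = a + b * q.1 + c * q.2 + d * q.1 ^ 2 + e * q.1 * q.2 + f * q.2 ^ 2

/-- The seven sampling points `z₀, …, z₆` of the first-layer patch of a vertex `z` of a
regular-pattern uniform triangular mesh with mesh size `h`. -/
def pts (h : ℝ) (z : ℝ × ℝ) : Fin 7 → ℝ × ℝ :=
  ![z, z + (h, 0), z + (h, h), z + (0, h), z - (h, 0), z - (h, h), z - (0, h)]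

/-- The least-squares functional `Σ_{j=0}^{6} (p(z_j) − u_j)²`. -/
noncomputable def LS (h : ℝ) (z : ℝ × ℝ) (u : Fin 7 → ℝ) (p : ℝ × ℝ → ℝ) : ℝ :=
  ∑ j : Fin 7, (p (pts h z j) - u j) ^ 2

lemma hasFDerivAt_P (a b c d e f : ℝ) (q : ℝ × ℝ) :
    HasFDerivAt (fun w : ℝ × ℝ => a + b * w.1 + c * w.2 + d * w.1 ^ 2 + e * w.1 * w.2 + f * w.2 ^ 2)
      ((b + 2 * d * q.1 + e * q.2) • ContinuousLinearMap.fst ℝ ℝ ℝ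
        + (c + e * q.1 + 2 * f * q.2) • ContinuousLinearMap.snd ℝ ℝ ℝ) q := by
  have hx : HasFDerivAt (fun w : ℝ × ℝ => w.1) (ContinuousLinearMap.fst ℝ ℝ ℝ) q := hasFDerivAt_fst
  have hy : HasFDerivAt (fun w : ℝ × ℝ => w.2) (ContinuousLinearMap.snd ℝ ℝ ℝ) q := hasFDerivAt_snd
  have H := (((((hasFDerivAt_const a q).add (hx.const_mul b)).add (hy.const_mul c)).add
      ((hx.mul hx).const_mul d)).add (((hx.const_mul e)).mul hy)).add ((hy.mul hy).const_mul f)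
  refine (H.congr_fderiv ?_).congr_of_eventuallyEq (Filter.Eventually.of_forall fun w => ?_)
  · ext <;> simp <;> ring
  · simp only [Pi.add_apply, Pi.mul_apply]; ring

lemma pdx_P (a b c d e f : ℝ) (q : ℝ × ℝ) :
    pdx (fun w : ℝ × ℝ => a + b * w.1 + c * w.2 + d * w.1 ^ 2 + e * w.1 * w.2 + f * w.2 ^ 2) q
      = b + 2 * d * q.1 + e * q.2 := by
  rw [pdx, (hasFDerivAt_P a b c d e f q).fderiv]; simp

lemma pdy_P (a b c d e f : ℝ) (q : ℝ × ℝ) :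
    pdy (fun w : ℝ × ℝ => a + b * w.1 + c * w.2 + d * w.1 ^ 2 + e * w.1 * w.2 + f * w.2 ^ 2) q
      = c + e * q.1 + 2 * f * q.2 := by
  rw [pdy, (hasFDerivAt_P a b c d e f q).fderiv]; simp

lemma LS_expand (h : ℝ) (z : ℝ × ℝ) (u : Fin 7 → ℝ) (p : ℝ × ℝ → ℝ) :
    LS h z u p = (p z - u 0)^2 + (p (z + (h,0)) - u 1)^2 + (p (z + (h,h)) - u 2)^2
      + (p (z + (0,h)) - u 3)^2 + (p (z - (h,0)) - u 4)^2 + (p (z - (h,h)) - u 5)^2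
      + (p (z - (0,h)) - u 6)^2 := by
  simp [LS, pts, Fin.sum_univ_seven]

lemma key0 (S A : ℝ) (hA : 0 ≤ A) (H : ∀ t : ℝ, 0 ≤ 2 * t * S + t ^ 2 * A) : S = 0 := by
  by_contra hS
  have hA1 : (0:ℝ) < A + 1 := by linarith
  have h1 := H (-S / (A + 1))
  have h2 : 0 < S ^ 2 := by positivity
  have h3 : 2 * (-S / (A + 1)) * S + (-S / (A + 1)) ^ 2 * A
      = (-(S ^ 2) * (A + 2)) / (A + 1) ^ 2 := by field_simp; ring
  rw [h3] at h1
  have h4 : 0 < (A + 1) ^ 2 := by positivity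
  have h5 : (-(S ^ 2) * (A + 2)) < 0 := by nlinarith
  have := div_neg_of_neg_of_pos h5 h4
  linarith

/-- **The recovered discrete Laplacian is the five-point stencil.** For any
least-squares fitted quadratic `p` on the seven-point patch, the trace of the recovered
Hessian at `z` equals `(u₁ + u₃ − 4u₀ + u₄ + u₆)/h²`. -/
theorem recovered_laplacian_five_point (h : ℝ) (hh : 0 < h) (z : ℝ × ℝ) (u : Fin 7 → ℝ)
    (p : ℝ × ℝ → ℝ) (hp : IsP2 p)
    (hmin : ∀ q : ℝ × ℝ → ℝ, IsP2 q → LS h z u p ≤ LS h z u q) :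
    pdx (pdx p) z + pdy (pdy p) z = (u 1 + u 3 - 4 * u 0 + u 4 + u 6) / h ^ 2 := by
  obtain ⟨a, b, c, d, e, f, hpe⟩ := hp
  have hpfun : p = fun w : ℝ × ℝ =>
      a + b * w.1 + c * w.2 + d * w.1 ^ 2 + e * w.1 * w.2 + f * w.2 ^ 2 := funext hpe
  subst hpfun
  have hh2 : (h : ℝ) ^ 2 ≠ 0 := by positivity
  have hh' : h ≠ 0 := ne_of_gt hh
  -- compute the second derivatives
  have hPx : pdx (fun w : ℝ × ℝ =>
      a + b * w.1 + c * w.2 + d * w.1 ^ 2 + e * w.1 * w.2 + f * w.2 ^ 2)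
      = fun w : ℝ × ℝ => b + (2*d) * w.1 + e * w.2 + 0 * w.1 ^ 2 + 0 * w.1 * w.2 + 0 * w.2 ^ 2 := by
    funext q; rw [pdx_P]; ring
  have hPy : pdy (fun w : ℝ × ℝ =>
      a + b * w.1 + c * w.2 + d * w.1 ^ 2 + e * w.1 * w.2 + f * w.2 ^ 2)
      = fun w : ℝ × ℝ => c + e * w.1 + (2*f) * w.2 + 0 * w.1 ^ 2 + 0 * w.1 * w.2 + 0 * w.2 ^ 2 := by
    funext q; rw [pdy_P]; ring
  rw [hPx, hPy, pdx_P, pdy_P]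
  -- the probe quadratic realizing the five-point stencil weights
  set P : ℝ × ℝ → ℝ := fun w =>
      a + b * w.1 + c * w.2 + d * w.1 ^ 2 + e * w.1 * w.2 + f * w.2 ^ 2 with hP
  set φ : ℝ × ℝ → ℝ := fun w =>
      -4 + 5 * ((w.1 - z.1)/h)^2 - 6 * ((w.1 - z.1)/h) * ((w.2 - z.2)/h) + 5 * ((w.2 - z.2)/h)^2
    with hφ
  have key : ∀ t : ℝ, LS h z u P ≤ LS h z u (fun w => P w + t * φ w) := by
    intro t
    refine hmin _ ⟨a + t * (-4 + 5*z.1^2/h^2 - 6*z.1*z.2/h^2 + 5*z.2^2/h^2),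
      b + t * (-10*z.1/h^2 + 6*z.2/h^2), c + t * (6*z.1/h^2 - 10*z.2/h^2),
      d + t * 5/h^2, e + t * (-6)/h^2, f + t * 5/h^2, fun q => ?_⟩
    simp only [hP, hφ]
    field_simp
    ring
  set S : ℝ := (P z - u 0) * φ z + (P (z + (h,0)) - u 1) * φ (z + (h,0))
      + (P (z + (h,h)) - u 2) * φ (z + (h,h)) + (P (z + (0,h)) - u 3) * φ (z + (0,h))
      + (P (z - (h,0)) - u 4) * φ (z - (h,0)) + (P (z - (h,h)) - u 5) * φ (z - (h,h))
      + (P (z - (0,h)) - u 6) * φ (z - (0,h)) with hSdef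
  set A : ℝ := φ z ^ 2 + φ (z + (h,0)) ^ 2 + φ (z + (h,h)) ^ 2 + φ (z + (0,h)) ^ 2
      + φ (z - (h,0)) ^ 2 + φ (z - (h,h)) ^ 2 + φ (z - (0,h)) ^ 2 with hAdef
  have expand : ∀ t : ℝ, LS h z u (fun w => P w + t * φ w) = LS h z u P + 2*t*S + t^2*A := by
    intro t
    rw [LS_expand, LS_expand, hSdef, hAdef]
    ring
  have hA : 0 ≤ A := by rw [hAdef]; positivity
  have hS : S = 0 := by
    refine key0 S A hA fun t => ?_
    have h1 := key t
    rw [expand t] at h1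
    linarith
  rw [hSdef, hP, hφ] at hS
  simp only [Prod.fst_add, Prod.snd_add, Prod.fst_sub, Prod.snd_sub] at hS
  norm_num at hS
  field_simp at hS
  rw [eq_div_iff hh2]
  linear_combination hS
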